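/- arXiv:2006.16089 — 2 statements merged into one kernel-verified Lean document; each statement's English description precedes it below -/
import Mathlib

section
/- For any prime p, positive integer a, and positive integer n with p not dividing n, the polynomial congruence (-x)^n · ∑_{k=1}^{p^a-1} B_k(x)/(-n)^k ≡ -∑_{r=1}^{a} x^{p^r} · ∑_{k=0}^{n-1} ((n-1)!/k!)·(-x)^k holds modulo p·Z_p[x]. -/
/-- Stirling numbers of the second kind. -/
def stirling2 : ℕ → ℕ → ℕ
  | 0, 0 => 1
  | 0, _ + 1 => 0
  | _ + 1, 0 => 0
  | n + 1, k + 1 => (k + 1) * stirling2 n (k + 1) + stirling2 n k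

/-- The Bell polynomial `B_n(x) = ∑_{k=0}^n S(n,k) x^k`. -/
noncomputable def bellPoly (R : Type*) [CommRing R] (n : ℕ) : Polynomial R :=
  ∑ k ∈ Finset.range (n + 1), Polynomial.C (stirling2 n k : R) * Polynomial.X ^ k


open Polynomial Finset

lemma stirling2_zero_succ (k : ℕ) : stirling2 0 (k+1) = 0 := rfl
lemma stirling2_succ_zero (n : ℕ) : stirling2 (n+1) 0 = 0 := rfl
lemma stirling2_succ_succ (n k : ℕ) :
    stirling2 (n+1) (k+1) = (k + 1) * stirling2 n (k + 1) + stirling2 n k := rfl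

lemma stirling2_eq_zero_of_lt : ∀ {n k : ℕ}, n < k → stirling2 n k = 0 := by
  intro n
  induction n with
  | zero => intro k hk; match k, hk with
    | k+1, _ => rfl
  | succ n ih =>
    intro k hk
    match k, hk with
    | k+1, hk =>
      rw [stirling2_succ_succ, ih (by omega), ih (by omega)]; ring

lemma stirling2_self (n : ℕ) : stirling2 n n = 1 := by
  induction n with
  | zero => rfl
  | succ n ih =>
    rw [stirling2_succ_succ, ih, stirling2_eq_zero_of_lt (Nat.lt_succ_self n)]; ring

lemma stirling2_one (l : ℕ) : stirling2 1 l = if l = 1 then 1 else 0 := by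
  match l with
  | 0 => rfl
  | 1 => rfl
  | l+2 => rw [stirling2_eq_zero_of_lt (by omega)]; simp

variable {R : Type*} [CommRing R]

lemma coeff_bellPoly (m l : ℕ) : (bellPoly R m).coeff l = (stirling2 m l : R) := by
  rw [bellPoly, Polynomial.finset_sum_coeff]
  simp only [Polynomial.coeff_C_mul, Polynomial.coeff_X_pow, mul_ite, mul_one, mul_zero]
  rw [Finset.sum_ite_eq (Finset.range (m+1)) l fun k => ((stirling2 m k : R))]
  split
  · rfl
  next h =>
    rw [Finset.mem_range] at h
    rw [stirling2_eq_zero_of_lt (by omega : m < l)]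
    simp


lemma bellPoly_succ (m : ℕ) :
    bellPoly R (m+1) = X * (bellPoly R m + derivative (bellPoly R m)) := by
  ext l
  rw [coeff_bellPoly]
  match l with
  | 0 => simp [stirling2_succ_zero]
  | l+1 =>
    rw [coeff_X_mul, coeff_add, coeff_bellPoly, coeff_derivative, coeff_bellPoly,
      stirling2_succ_succ]
    push_cast
    ring


lemma choose_key (k j : ℕ) (hj : j ≤ k + 1) :
    (j : ℤ) * (k+1).choose j = (k+1) * ((k+1).choose j - (k.choose j : ℤ)) := by
  match j with
  | 0 => simp
  | j+1 =>
    have h1 : (k+1).choose (j+1) = k.choose j + k.choose (j+1) := Nat.choose_succ_succ k j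
    have h2 : (j+1) * (k+1).choose (j+1) = (k+1) * k.choose j := by
      rw [mul_comm (j+1), ← Nat.add_one_mul_choose_eq]
    push_cast [h1]
    push_cast at h2
    nlinarith [h2]

lemma stirling2_int_formula : ∀ (m l : ℕ), (l.factorial : ℤ) * stirling2 m l =
    ∑ j ∈ Finset.range (l+1), (-1)^(l-j) * (l.choose j : ℤ) * (j:ℤ)^m := by
  intro m
  induction m with
  | zero =>
    intro l
    have : ∑ j ∈ Finset.range (l+1), (-1:ℤ)^(l-j) * (l.choose j : ℤ) * (j:ℤ)^0
        = ∑ j ∈ Finset.range (l+1), (-1:ℤ)^j * (l.choose j : ℤ) := by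
      rw [← Finset.sum_range_reflect]
      apply Finset.sum_congr rfl
      intro j hj
      rw [Finset.mem_range] at hj
      have h0 : l + 1 - 1 - j = l - j := by omega
      have h1 : l - (l - j) = j := by omega
      rw [h0, h1, Nat.choose_symm (by omega), pow_zero, mul_one]
    rw [this, Int.alternating_sum_range_choose]
    match l with
    | 0 => simp [stirling2]
    | l+1 => simp [stirling2]
  | succ m ih =>
    intro l
    match l with
    | 0 => simp [stirling2]
    | k+1 =>
      have step : ∀ j ∈ Finset.range (k+2),
          (-1:ℤ)^(k+1-j) * ((k+1).choose j : ℤ) * (j:ℤ)^(m+1)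
          = (k+1) * ((-1)^(k+1-j) * ((k+1).choose j : ℤ) * (j:ℤ)^m)
            - (k+1) * ((-1)^(k+1-j) * (k.choose j : ℤ) * (j:ℤ)^m) := by
        intro j hj
        rw [Finset.mem_range] at hj
        have := choose_key k j (by omega)
        calc (-1:ℤ)^(k+1-j) * ((k+1).choose j : ℤ) * (j:ℤ)^(m+1)
            = ((j:ℤ) * ((k+1).choose j)) * ((-1)^(k+1-j) * (j:ℤ)^m) := by ring
          _ = ((k+1) * ((k+1).choose j - (k.choose j : ℤ))) * ((-1)^(k+1-j) * (j:ℤ)^m) := by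
              rw [this]
          _ = _ := by ring
      rw [Finset.sum_congr rfl step, Finset.sum_sub_distrib, ← Finset.mul_sum, ← Finset.mul_sum]
      have drop : ∑ j ∈ Finset.range (k+2), (-1:ℤ)^(k+1-j) * (k.choose j : ℤ) * (j:ℤ)^m
          = - ∑ j ∈ Finset.range (k+1), (-1:ℤ)^(k-j) * (k.choose j : ℤ) * (j:ℤ)^m := by
        rw [Finset.sum_range_succ, Nat.choose_succ_self]
        simp only [Nat.cast_zero, mul_zero, zero_mul, add_zero]
        rw [← Finset.sum_neg_distrib]
        apply Finset.sum_congr rfl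
        intro j hj
        rw [Finset.mem_range] at hj
        have : k + 1 - j = (k - j) + 1 := by omega
        rw [this, pow_succ]
        ring
      rw [drop, ← ih (k+1), ← ih k, stirling2_succ_succ]
      push_cast [Nat.factorial_succ]
      ring


section PrimeSection
variable (p : ℕ) [Fact p.Prime]
local notation "K" => ZMod p
local notation "b" => bellPoly K

lemma stirling2_p_mod (l : ℕ) (hl : l < p) :
    (stirling2 p l : ZMod p) = (stirling2 1 l : ZMod p) := by
  have key : ∀ m : ℕ, ((l.factorial : ZMod p)) * stirling2 m l =
      ∑ j ∈ Finset.range (l+1), (-1)^(l-j) * (l.choose j : ZMod p) * (j : ZMod p)^m := by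
    intro m
    have := stirling2_int_formula m l
    have := congrArg (fun z : ℤ => (z : ZMod p)) this
    push_cast at this
    exact this
  have h1 := key p
  have h2 := key 1
  have hpow : ∀ j : ℕ, ((j : ZMod p))^p = (j : ZMod p) := fun j => ZMod.pow_card _
  rw [show (∑ j ∈ Finset.range (l+1), (-1)^(l-j) * (l.choose j : ZMod p) * (j : ZMod p)^p)
      = ∑ j ∈ Finset.range (l+1), (-1)^(l-j) * (l.choose j : ZMod p) * (j : ZMod p)^1 from
      Finset.sum_congr rfl (fun j _ => by rw [hpow, pow_one])] at h1
  rw [← h2] at h1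
  have hfac : (l.factorial : ZMod p) ≠ 0 := by
    rw [Ne, ZMod.natCast_eq_zero_iff]
    intro hdvd
    exact absurd ((Nat.Prime.dvd_factorial (Fact.out)).mp hdvd) (by omega)
  exact_mod_cast mul_left_cancel₀ hfac h1

lemma bellPoly_p : bellPoly (ZMod p) p = X + X ^ p := by
  rw [bellPoly, Finset.sum_range_succ, stirling2_self]
  have h2 : 2 ≤ p := (Fact.out : p.Prime).two_le
  have : ∑ l ∈ Finset.range p, (C (stirling2 p l : ZMod p)) * X ^ l
      = ∑ l ∈ Finset.range p, (if l = 1 then (X:(ZMod p)[X])^l else 0) := by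
    apply Finset.sum_congr rfl
    intro l hl
    rw [Finset.mem_range] at hl
    rw [stirling2_p_mod p l hl, stirling2_one]
    split <;> simp
  rw [this, Finset.sum_ite_eq' (Finset.range p) 1 (fun l => (X:(ZMod p)[X])^l),
    if_pos (Finset.mem_range.mpr (by omega)), pow_one]
  push_cast
  rw [map_one]
  ring


lemma bellPoly_zero : (b 0 : K[X]) = 1 := by
  rw [bellPoly]; simp [stirling2_self 0]

lemma bellPoly_one : (b 1 : K[X]) = X := by
  rw [bellPoly_succ, bellPoly_zero]; simp

lemma deriv_Xp_mul (f : K[X]) :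
    derivative (X ^ p * f) = X ^ p * derivative f := by
  rw [derivative_mul, derivative_X_pow]
  have : ((p : K)) = 0 := ZMod.natCast_self p
  simp [this]


lemma touchard : ∀ k, (b (k + p) : K[X]) = b (k+1) + X ^ p * b k := by
  intro k
  induction k with
  | zero => rw [zero_add, bellPoly_p, bellPoly_one, bellPoly_zero]; ring
  | succ k ih =>
    have h : k + 1 + p = (k + p) + 1 := by omega
    have e1 := bellPoly_succ (R := K) (k+1)
    rw [h, bellPoly_succ, ih, derivative_add, deriv_Xp_mul, e1, bellPoly_succ (R:=K) k]
    ring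

lemma bc : ∀ m k, (b (k + m * p) : K[X]) =
    ∑ j ∈ Finset.range (m+1), C ((m.choose j : K)) * (X ^ (p*j) * b (k + (m - j))) := by
  intro m
  induction m with
  | zero => intro k; simp
  | succ m ih =>
    intro k
    have h1 : k + (m+1) * p = (k + p) + m * p := by ring
    rw [h1, ih (k + p)]
    have h2 : ∀ j ∈ Finset.range (m+1),
        C ((m.choose j : K)) * (X ^ (p*j) * b ((k+p) + (m - j)))
        = C ((m.choose j : K)) * (X ^ (p*j) * b (k + (m+1-j)))
          + C ((m.choose j : K)) * (X ^ (p*(j+1)) * b (k + (m - j))) := by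
      intro j hj
      rw [Finset.mem_range] at hj
      have h3 : (k+p) + (m-j) = (k + (m-j)) + p := by omega
      have h4 : k + (m-j) + 1 = k + (m+1-j) := by omega
      rw [h3, touchard, h4, mul_add, show p*(j+1) = p*j + p by ring, pow_add]
      ring
    rw [Finset.sum_congr rfl h2, Finset.sum_add_distrib]
    -- now RHS target: peel j = 0
    rw [Finset.sum_range_succ' (fun j => C (((m+1).choose j : K)) * (X ^ (p*j) * b (k + (m + 1 - j)))) (m+1)]
    have h5 : ∀ j ∈ Finset.range (m+1),
        C ((((m+1)).choose (j+1) : K)) * (X ^ (p*(j+1)) * b (k + (m + 1 - (j+1))))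
        = C ((m.choose (j+1) : K)) * (X ^ (p*(j+1)) * b (k + (m+1 - (j+1))))
          + C ((m.choose j : K)) * (X ^ (p*(j+1)) * b (k + (m - j))) := by
      intro j hj
      rw [Finset.mem_range] at hj
      have e1 : m + 1 - (j+1) = m - j := by omega
      rw [Nat.choose_succ_succ, e1, Nat.cast_add, map_add]
      ring
    rw [Finset.sum_congr rfl h5, Finset.sum_add_distrib]
    have h6 : ∑ j ∈ Finset.range (m+1),
          C ((m.choose (j+1) : K)) * (X ^ (p*(j+1)) * b (k + (m+1 - (j+1))))
        = ∑ j ∈ Finset.range (m+1), C ((m.choose j : K)) * (X ^ (p*j) * b (k + (m+1-j)))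
          - C ((m.choose 0 : K)) * (X ^ (p*0) * b (k + (m + 1 - 0))) := by
      rw [eq_sub_iff_add_eq,
        ← Finset.sum_range_succ' (fun j => C ((m.choose j : K)) * (X ^ (p*j) * b (k + (m+1-j)))) (m+1),
        Finset.sum_range_succ, Nat.choose_succ_self]
      simp
    rw [h6]
    have h7 : C (((m+1).choose 0 : K)) = C ((m.choose 0 : K)) := by norm_num
    rw [h7]
    ring

lemma bell_prime_pow : ∀ a, 1 ≤ a →
    (b (p ^ a) : K[X]) = X + ∑ r ∈ Finset.Icc 1 a, X ^ (p ^ r) := by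
  intro a
  induction a with
  | zero => omega
  | succ a ih =>
    intro _
    by_cases ha : a = 0
    · subst ha
      simp only [zero_add, pow_one, Finset.Icc_self, Finset.sum_singleton]
      exact bellPoly_p p
    · have ha1 : 1 ≤ a := by omega
      have h1 : p ^ (a+1) = 0 + p ^ a * p := by ring
      rw [h1, bc]
      have hsub : ({0, p^a} : Finset ℕ) ⊆ Finset.range (p^a + 1) := by
        intro x hx
        rcases Finset.mem_insert.mp hx with h | h
        · simp [h]
        · rw [Finset.mem_singleton] at h; simp [h]
      rw [← Finset.sum_subset hsub ?_]
      · have hne : (0 : ℕ) ≠ p ^ a := by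
          have := (Fact.out : p.Prime).two_le
          positivity
        rw [Finset.sum_pair hne]
        rw [Nat.choose_zero_right, Nat.choose_self, Nat.sub_self, Nat.sub_zero]
        simp only [mul_zero, pow_zero, zero_add, Nat.cast_one, map_one, one_mul]
        rw [ih ha1, bellPoly_zero, Finset.sum_Icc_succ_top (by omega : 1 ≤ a + 1)]
        rw [show p * p ^ a = p ^ (a+1) by ring]
        ring
      · intro x hx hnx
        have hx0 : x ≠ 0 := by
          intro h; apply hnx; simp [h]
        have hxp : x ≠ p ^ a := by
          intro h; apply hnx; simp [h]
        have : ((p ^ a).choose x : K) = 0 := by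
          rw [ZMod.natCast_eq_zero_iff]
          exact Nat.Prime.dvd_choose_pow (Fact.out) hx0 hxp
        rw [this]
        simp


-- injectivity of f ↦ X * (f + f')
lemma M_inj {R : Type*} [CommRing R] [NoZeroDivisors R] (f g : R[X])
    (h : X * (f + derivative f) = X * (g + derivative g)) : f = g := by
  by_contra hne
  have hd : f - g ≠ 0 := sub_ne_zero.mpr hne
  set d := f - g with hdd
  have h0 : X * (d + derivative d) = 0 := by
    rw [hdd, derivative_sub]
    rw [show f - g + (derivative f - derivative g)
      = (f + derivative f) - (g + derivative g) by ring, mul_sub, h, sub_self]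
  have hc := congrArg (fun q => Polynomial.coeff q (d.natDegree + 1)) h0
  simp only [Polynomial.coeff_X_mul, Polynomial.coeff_zero, Polynomial.coeff_add,
    Polynomial.coeff_derivative] at hc
  rw [Polynomial.coeff_natDegree_succ_eq_zero] at hc
  simp only [zero_mul, add_zero] at hc
  exact hd (Polynomial.leadingCoeff_eq_zero.mp hc)

theorem telescope (a n : ℕ) (ha : 0 < a) (hn0 : ((n : K)) ≠ 0) :
    X * ((∑ k ∈ Finset.Icc 1 (p^a - 1), C ((-(n:K))⁻¹^k) * b k)
        + derivative (∑ k ∈ Finset.Icc 1 (p^a - 1), C ((-(n:K))⁻¹^k) * b k))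
      + C ((n:K)) * (∑ k ∈ Finset.Icc 1 (p^a - 1), C ((-(n:K))⁻¹^k) * b k)
    = ∑ r ∈ Finset.Icc 1 a, X ^ (p ^ r) := by
  set v : K := (-(n:K))⁻¹ with hv
  have hvne : v ≠ 0 := by
    rw [hv]
    simp [hn0]
  have hnv : (n : K) * v = -1 := by
    rw [hv]
    field_simp
  have hterm : ∀ k, 1 ≤ k →
      X * ((C (v^k) * b k) + derivative (C (v^k) * b k)) + C ((n:K)) * (C (v^k) * b k)
      = C (v^k) * b (k+1) - C (v^(k-1)) * b k := by
    intro k hk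
    rw [derivative_C_mul]
    have h1 : C ((n:K)) * C (v^k) = - C (v^(k-1)) := by
      rw [← map_mul, ← map_neg]
      congr 1
      have : v ^ k = v^(k-1) * v := by
        rw [← pow_succ]
        congr 1
        omega
      rw [this, ← mul_assoc, mul_comm ((n:K)), mul_assoc, hnv]
      ring
    calc X * ((C (v^k) * b k) + C (v^k) * derivative (b k)) + C ((n:K)) * (C (v^k) * b k)
        = C (v^k) * (X * (b k + derivative (b k))) + (C ((n:K)) * C (v^k)) * b k := by ring
      _ = C (v^k) * b (k+1) - C (v^(k-1)) * b k := by
          rw [h1, ← bellPoly_succ k]; ring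
  -- combine into one sum
  rw [derivative_sum, ← Finset.sum_add_distrib, Finset.mul_sum, Finset.mul_sum,
    ← Finset.sum_add_distrib]
  rw [Finset.sum_congr rfl (fun k hk => hterm k (Finset.mem_Icc.mp hk).1)]
  -- reindex and telescope
  rw [show Finset.Icc 1 (p^a - 1) = Finset.Ico 1 (p^a - 1 + 1) from (Finset.Ico_add_one_right_eq_Icc 1 _).symm,
    Finset.sum_Ico_eq_sum_range]
  have hre : ∀ i ∈ Finset.range (p^a - 1 + 1 - 1),
      C (v^(1+i)) * b ((1+i)+1) - C (v^(1+i-1)) * b (1+i)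
      = (fun j => C (v^j) * b (j+1)) (i+1) - (fun j => C (v^j) * b (j+1)) i := by
    intro i _
    have e1 : 1 + i - 1 = i := by omega
    have e2 : 1 + i + 1 = (i + 1) + 1 := by omega
    have e3 : 1 + i = i + 1 := by omega
    simp only []
    rw [e1, e2, e3]
  rw [Finset.sum_congr rfl hre, Finset.sum_range_sub (fun j => C (v^j) * b (j+1))]
  have hp2 : 2 ≤ p := (Fact.out : p.Prime).two_le
  have hN : 2 ≤ p ^ a := by
    calc 2 ≤ p := hp2
    _ = p^1 := (pow_one p).symm
    _ ≤ p^a := Nat.pow_le_pow_right (by omega) ha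
  have e4 : p ^ a - 1 + 1 - 1 = p ^ a - 1 := by omega
  have e5 : p ^ a - 1 + 1 = p ^ a := Nat.succ_pred_eq_of_pos (by positivity)
  rw [e4, e5, pow_zero, map_one, one_mul, bellPoly_one, bell_prime_pow p a ha]
  have hvN : v ^ (p^a - 1) = 1 := by
    have h2 : v ^ (p^a) = v := ZMod.pow_card_pow v
    have h3 : v ^ (p^a - 1) * v = 1 * v := by
      rw [← pow_succ, e5, h2, one_mul]
    exact mul_right_cancel₀ hvne h3
  rw [hvN, map_one, one_mul]
  ring

lemma neg_X_pow_eq (j : ℕ) : ((-X : K[X]))^j = C ((-1:K)^j) * X^j := by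
  rw [neg_pow, map_pow, map_neg, map_one]

lemma deriv_neg_X_pow (j : ℕ) :
    derivative ((-X : K[X])^j) = C ((-1:K)^j) * (C ((j:K)) * X^(j-1)) := by
  rw [neg_X_pow_eq, derivative_C_mul, derivative_X_pow]

lemma fac_div_succ (m k : ℕ) (hk : k + 1 ≤ m) :
    (k+1) * (m.factorial / (k+1).factorial) = m.factorial / k.factorial := by
  obtain ⟨t, ht⟩ := Nat.factorial_dvd_factorial hk
  have h1 : m.factorial / (k+1).factorial = t := by
    rw [ht, Nat.mul_div_cancel_left _ (Nat.factorial_pos _)]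
  have h2 : m.factorial / k.factorial = (k+1) * t := by
    rw [ht, Nat.factorial_succ, show (k+1) * k.factorial * t = k.factorial * ((k+1)*t) by ring,
      Nat.mul_div_cancel_left _ (Nat.factorial_pos k)]
  rw [h1, h2]

lemma D_eq (m : ℕ) :
    (∑ k ∈ Finset.range (m+1), C (((m.factorial / k.factorial : ℕ)) : K) * (-X)^k)
    + derivative (∑ k ∈ Finset.range (m+1), C (((m.factorial / k.factorial : ℕ)) : K) * (-X)^k)
    = (-X)^m := by
  rw [derivative_sum]
  rw [Finset.sum_range_succ' (fun k => derivative (C (((m.factorial / k.factorial : ℕ)) : K) * (-X)^k)) m]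
  have h0 : derivative (C (((m.factorial / Nat.factorial 0 : ℕ)) : K) * (-X)^0) = 0 := by
    simp
  rw [h0, add_zero]
  have hterm : ∀ k ∈ Finset.range m,
      derivative (C (((m.factorial / (k+1).factorial : ℕ)) : K) * (-X)^(k+1))
      = - (C (((m.factorial / k.factorial : ℕ)) : K) * (-X)^k) := by
    intro k hk
    rw [Finset.mem_range] at hk
    rw [derivative_C_mul, deriv_neg_X_pow, neg_X_pow_eq]
    have e1 : (k+1) - 1 = k := by omega
    rw [e1]
    have hc : (((k+1) : ℕ) : K) * ((m.factorial/(k+1).factorial : ℕ) : K)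
        = ((m.factorial/k.factorial : ℕ) : K) := by
      rw [← Nat.cast_mul, fac_div_succ m k (by omega)]
    rw [← hc]
    simp only [pow_succ, map_mul, map_neg, map_one, Nat.cast_add, Nat.cast_one]
    ring
  rw [Finset.sum_congr rfl hterm, Finset.sum_range_succ, Finset.sum_neg_distrib]
  rw [Nat.div_self (Nat.factorial_pos m)]
  push_cast
  rw [map_one, one_mul]
  ring

theorem main_K (a n : ℕ) (ha : 0 < a) (hn : 0 < n) (hn0 : ((n : K)) ≠ 0) :
    (-X)^n * (∑ k ∈ Finset.Icc 1 (p^a - 1), C ((-(n:K))⁻¹ ^ k) * b k)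
    = -(∑ r ∈ Finset.Icc 1 a, X^(p^r) *
        ∑ k ∈ Finset.range n, C ((((n-1).factorial / k.factorial : ℕ)) : K) * (-X)^k) := by
  obtain ⟨m, rfl⟩ : ∃ m, n = m + 1 := ⟨n - 1, by omega⟩
  simp only [Nat.add_sub_cancel]
  set G : K[X] := ∑ k ∈ Finset.Icc 1 (p^a - 1), C ((-((m+1:ℕ):K))⁻¹ ^ k) * b k with hG
  set D : K[X] := ∑ k ∈ Finset.range (m+1), C (((m.factorial / k.factorial : ℕ)) : K) * (-X)^k with hD
  set W : K[X] := ∑ r ∈ Finset.Icc 1 a, X^(p^r) with hW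
  have hrhs : -(∑ r ∈ Finset.Icc 1 a, X^(p^r) * D) = -(W * D) := by
    rw [hW, Finset.sum_mul]
  rw [hrhs]
  apply M_inj
  have htel := telescope p a (m+1) ha (by exact_mod_cast hn0)
  rw [← hG, ← hW] at htel
  -- left side
  have hL : X * ((-X)^(m+1) * G + derivative ((-X)^(m+1) * G)) = (-X)^(m+1) * W := by
    rw [derivative_mul, deriv_neg_X_pow, Nat.add_sub_cancel, neg_X_pow_eq p (m+1)]
    calc X * (C ((-1:K)^(m+1)) * X^(m+1) * G
          + (C ((-1:K)^(m+1)) * (C (((m+1:ℕ)):K) * X^m) * G + C ((-1:K)^(m+1)) * X^(m+1) * derivative G))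
        = C ((-1:K)^(m+1)) * X^(m+1) * (X * (G + derivative G) + C (((m+1:ℕ)):K) * G) := by
          rw [pow_succ]
          push_cast
          ring
      _ = C ((-1:K)^(m+1)) * X^(m+1) * W := by rw [htel]
  rw [hL]
  -- right side
  have hW' : derivative W = 0 := by
    rw [hW, derivative_sum]
    apply Finset.sum_eq_zero
    intro r hr
    rw [Finset.mem_Icc] at hr
    rw [derivative_X_pow]
    have : ((p^r : ℕ) : K) = 0 := by
      rw [ZMod.natCast_eq_zero_iff]
      exact dvd_pow_self p (by omega)
    rw [this]
    simp
  have hDD : D + derivative D = (-X)^m := D_eq p m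
  have hR : X * (-(W * D) + derivative (-(W * D))) = (-X)^(m+1) * W := by
    rw [derivative_neg, derivative_mul, hW', zero_mul, zero_add]
    calc X * (-(W * D) + -(W * derivative D)) = -(X * (D + derivative D)) * W := by ring
      _ = (-X)^(m+1) * W := by
          rw [hDD, pow_succ]
          ring
  rw [hR]


end PrimeSection

open Polynomial in
/-- For a prime `p` and positive integers `a`, `n` with `p ∤ n`,
`(-x)^n ∑_{k=1}^{p^a-1} B_k(x)/(-n)^k ≡ -∑_{r=1}^a x^{p^r} ∑_{k=0}^{n-1} ((n-1)!/k!)(-x)^k`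
modulo `p·ℤ_p[x]`. -/
theorem sun_zagier_extension_poly (p : ℕ) [Fact p.Prime] (a n : ℕ) (ha : 0 < a) (hn : 0 < n)
    (hpn : ¬ p ∣ n) :
    (p : Polynomial ℤ_[p]) ∣
      (-X) ^ n * (∑ k ∈ Finset.Icc 1 (p ^ a - 1),
          C (Ring.inverse ((-(n : ℤ_[p])) ^ k)) * bellPoly ℤ_[p] k) -
        (-(∑ r ∈ Finset.Icc 1 a, X ^ (p ^ r) *
            ∑ k ∈ Finset.range n, C (((n - 1).factorial / k.factorial : ℕ) : ℤ_[p]) * (-X) ^ k)) := by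
  have hdvd_iff : ∀ z : ℤ_[p], (p : ℤ_[p]) ∣ z ↔ PadicInt.toZMod z = 0 := by
    intro z
    rw [← Ideal.mem_span_singleton, ← PadicInt.maximalIdeal_eq_span_p, ← PadicInt.ker_toZMod,
      RingHom.mem_ker]
  have hn0 : ((n : ZMod p)) ≠ 0 := by
    rw [Ne, ZMod.natCast_eq_zero_iff]
    exact hpn
  -- the key map computation
  have hunit : IsUnit (-(n : ℤ_[p])) := by
    apply IsUnit.neg
    rw [PadicInt.isUnit_iff]
    have h1 : ‖((n:ℤ) : ℤ_[p])‖ ≤ 1 := PadicInt.norm_le_one _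
    have h2 : ¬ ‖((n:ℤ) : ℤ_[p])‖ < 1 := by
      rw [PadicInt.norm_int_lt_one_iff_dvd]
      exact_mod_cast hpn
    push_cast at h1 h2 ⊢
    exact le_antisymm h1 (not_lt.mp h2)
  have hinv : ∀ k : ℕ, PadicInt.toZMod (Ring.inverse ((-(n : ℤ_[p])) ^ k))
      = (-(n : ZMod p))⁻¹ ^ k := by
    intro k
    have hu : IsUnit ((-(n : ℤ_[p])) ^ k) := hunit.pow k
    have h1 : Ring.inverse ((-(n : ℤ_[p])) ^ k) * ((-(n : ℤ_[p])) ^ k) = 1 :=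
      Ring.inverse_mul_cancel _ hu
    have h2 := congrArg PadicInt.toZMod h1
    rw [map_mul, map_one, map_pow, map_neg, map_natCast] at h2
    rw [inv_pow]
    exact eq_inv_of_mul_eq_one_left h2
  have hbell : ∀ k, (bellPoly ℤ_[p] k).map (PadicInt.toZMod) = bellPoly (ZMod p) k := by
    intro k
    rw [bellPoly, bellPoly, Polynomial.map_sum]
    apply Finset.sum_congr rfl
    intro l _
    rw [Polynomial.map_mul, Polynomial.map_pow, Polynomial.map_C, map_natCast, Polynomial.map_X]
  rw [show ((p : Polynomial ℤ_[p])) = C ((p : ℤ_[p])) from (map_natCast C p).symm,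
    Polynomial.C_dvd_iff_dvd_coeff]
  intro i
  rw [hdvd_iff]
  have hmap0 : (((-X) ^ n * (∑ k ∈ Finset.Icc 1 (p ^ a - 1),
          C (Ring.inverse ((-(n : ℤ_[p])) ^ k)) * bellPoly ℤ_[p] k) -
        (-(∑ r ∈ Finset.Icc 1 a, X ^ (p ^ r) *
            ∑ k ∈ Finset.range n, C (((n - 1).factorial / k.factorial : ℕ) : ℤ_[p]) * (-X) ^ k))) :
      Polynomial ℤ_[p]).map (PadicInt.toZMod) = 0 := by
    rw [Polynomial.map_sub, sub_eq_zero]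
    have hA : (((-X) ^ n * (∑ k ∈ Finset.Icc 1 (p ^ a - 1),
          C (Ring.inverse ((-(n : ℤ_[p])) ^ k)) * bellPoly ℤ_[p] k)) : Polynomial ℤ_[p]).map
          (PadicInt.toZMod)
        = (-X)^n * (∑ k ∈ Finset.Icc 1 (p^a - 1), C ((-(n: ZMod p))⁻¹ ^ k) * bellPoly (ZMod p) k) := by
      rw [Polynomial.map_mul, Polynomial.map_pow, Polynomial.map_neg, Polynomial.map_X,
        Polynomial.map_sum]
      congr 1
      apply Finset.sum_congr rfl
      intro k _
      rw [Polynomial.map_mul, Polynomial.map_C, hinv k, hbell k]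
    have hB : ((-(∑ r ∈ Finset.Icc 1 a, X ^ (p ^ r) *
            ∑ k ∈ Finset.range n, C (((n - 1).factorial / k.factorial : ℕ) : ℤ_[p]) * (-X) ^ k)) :
          Polynomial ℤ_[p]).map (PadicInt.toZMod)
        = -(∑ r ∈ Finset.Icc 1 a, X^(p^r) *
            ∑ k ∈ Finset.range n, C ((((n-1).factorial / k.factorial : ℕ)) : ZMod p) * (-X)^k) := by
      rw [Polynomial.map_neg, Polynomial.map_sum]
      congr 1
      apply Finset.sum_congr rfl
      intro r _
      rw [Polynomial.map_mul, Polynomial.map_pow, Polynomial.map_X, Polynomial.map_sum]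
      congr 1
      apply Finset.sum_congr rfl
      intro k _
      rw [Polynomial.map_mul, Polynomial.map_C, map_natCast, Polynomial.map_pow,
        Polynomial.map_neg, Polynomial.map_X]
    rw [hA, hB, main_K p a n ha hn hn0]
  rw [← Polynomial.coeff_map, hmap0, Polynomial.coeff_zero]
end

section
/- For any prime p and positive integer a, the alternating sum ∑_{k=1}^{p^a-1} (-1)^k · B_k of Bell numbers is congruent to a modulo p. -/
/-- The Bell numbers: the number of partitions of an `n`-element set. -/
def bell (n : ℕ) : ℕ := ∑ k ∈ Finset.range (n + 1), stirling2 n k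

open Polynomial Finset

namespace AltBell

lemma stirling2_eq_zero {n k : ℕ} (h : n < k) : stirling2 n k = 0 := by
  induction n generalizing k with
  | zero => obtain ⟨m, rfl⟩ : ∃ m, k = m + 1 := ⟨k - 1, by omega⟩; rfl
  | succ n ih =>
    obtain ⟨m, rfl⟩ : ∃ m, k = m + 1 := ⟨k - 1, by omega⟩
    have e : stirling2 (n + 1) (m + 1) = (m + 1) * stirling2 n (m + 1) + stirling2 n m := by
      simp [stirling2]
    rw [e, ih (by omega), ih (by omega)]
    ring

lemma stirling2_self (n : ℕ) : stirling2 n n = 1 := by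
  induction n with
  | zero => rfl
  | succ n ih =>
    have e : stirling2 (n + 1) (n + 1) = (n + 1) * stirling2 n (n + 1) + stirling2 n n := by
      simp [stirling2]
    rw [e, stirling2_eq_zero (lt_add_one n), ih]
    ring

lemma stirling2_succ (n k : ℕ) :
    stirling2 (n + 1) (k + 1) = (k + 1) * stirling2 n (k + 1) + stirling2 n k := by
  simp [stirling2]

variable {R : Type} [CommRing R]

/-- Falling factorial polynomials `x(x-1)⋯(x-k+1)`. -/
noncomputable def ff (R : Type) [CommRing R] : ℕ → R[X]
  | 0 => 1
  | k + 1 => ff R k * (X - C (k : R))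

lemma ff_succ (k : ℕ) : ff R (k + 1) = ff R k * (X - C (k : R)) := rfl

/-- The Bell umbral functional. -/
noncomputable def phi (R : Type) [CommRing R] : R[X] →ₗ[R] R where
  toFun f := f.sum fun n c => c * bell n
  map_add' f g := Polynomial.sum_add_index f g _ (fun n => zero_mul _)
    (fun n a b => add_mul a b _)
  map_smul' c f := by
    simp only [RingHom.id_apply, smul_eq_mul]
    show (c • f).sum (fun n a => a * (bell n : R)) = c * f.sum fun n a => a * (bell n : R)
    rw [Polynomial.sum_smul_index f c (fun n a => a * (bell n : R)) (fun i => zero_mul _)]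
    simp only [Polynomial.sum]
    rw [Finset.mul_sum]
    exact Finset.sum_congr rfl fun n _ => by ring

lemma phi_apply (f : R[X]) : phi R f = f.sum fun n c => c * bell n := rfl

lemma phi_monomial (n : ℕ) (c : R) : phi R (monomial n c) = c * bell n := by
  rw [phi_apply, Polynomial.sum_monomial_index]
  exact zero_mul _

lemma phi_X_pow (n : ℕ) : phi R (X ^ n) = bell n := by
  rw [← Polynomial.monomial_one_right_eq_X_pow, phi_monomial, one_mul]

lemma bell_zero : bell 0 = 1 := rfl

lemma bell_one : bell 1 = 1 := rfl

lemma phi_one : phi R 1 = 1 := by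
  have h := phi_X_pow (R := R) 0
  rw [pow_zero] at h
  rw [h, bell_zero, Nat.cast_one]

lemma phi_C_mul (c : R) (f : R[X]) : phi R (C c * f) = c * phi R f := by
  rw [← smul_eq_C_mul, map_smul, smul_eq_mul]

lemma phi_C (c : R) : phi R (C c) = c := by
  have h := phi_C_mul c (1 : R[X])
  rw [mul_one, phi_one, mul_one] at h
  exact h

lemma X_mul_ff (k : ℕ) : X * ff R k = ff R (k + 1) + C (k : R) * ff R k := by
  rw [ff_succ]; ring

lemma X_pow_eq (n : ℕ) :
    (X : R[X]) ^ n = ∑ k ∈ range (n + 1), C (stirling2 n k : R) * ff R k := by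
  induction n with
  | zero => simp [ff, stirling2_self]
  | succ n ih =>
    rw [pow_succ, ih, Finset.sum_mul]
    have key : ∀ k, (C (stirling2 n k : R) * ff R k) * X
        = C (stirling2 n k : R) * ff R (k + 1)
          + C ((k : ℕ) : R) * C (stirling2 n k : R) * ff R k := by
      intro k
      have h : (C (stirling2 n k : R) * ff R k) * X = C (stirling2 n k : R) * (X * ff R k) := by
        ring
      rw [h, X_mul_ff]
      ring
    rw [Finset.sum_congr rfl fun k _ => key k, Finset.sum_add_distrib]
    rw [Finset.sum_range_succ' (fun k => C (stirling2 (n + 1) k : R) * ff R k) (n + 1)]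
    have h0 : C (stirling2 (n + 1) 0 : R) * ff R 0 = 0 := by
      have e : stirling2 (n + 1) 0 = 0 := rfl
      simp [e]
    rw [h0, add_zero]
    have hrec : ∀ k, C (stirling2 (n + 1) (k + 1) : R) * ff R (k + 1)
        = C ((k + 1 : ℕ) : R) * C (stirling2 n (k + 1) : R) * ff R (k + 1)
          + C (stirling2 n k : R) * ff R (k + 1) := by
      intro k
      rw [stirling2_succ]
      push_cast
      rw [C_add, C_mul]
      ring
    rw [Finset.sum_congr rfl fun k _ => hrec k, Finset.sum_add_distrib]
    have hshift :
        ∑ k ∈ range (n + 1), C ((k + 1 : ℕ) : R) * C (stirling2 n (k + 1) : R) * ff R (k + 1)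
          = ∑ k ∈ range (n + 1), C ((k : ℕ) : R) * C (stirling2 n k : R) * ff R k := by
      set f : ℕ → R[X] := fun k => C ((k : ℕ) : R) * C (stirling2 n k : R) * ff R k with hf
      have e1 := Finset.sum_range_succ' f (n + 1)
      have e2 := Finset.sum_range_succ f (n + 1)
      have hf0 : f 0 = 0 := by simp [hf]
      have hfn : f (n + 1) = 0 := by
        simp [hf, stirling2_eq_zero (lt_add_one n)]
      rw [hf0, add_zero] at e1
      rw [hfn, add_zero] at e2
      exact e1.symm.trans e2
    rw [hshift]
    ring

lemma phi_ff (k : ℕ) : phi R (ff R k) = 1 := by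
  induction k using Nat.strong_induction_on with
  | _ k ih =>
    have h := X_pow_eq (R := R) k
    rw [Finset.sum_range_succ, stirling2_self] at h
    rw [Nat.cast_one, C_1, one_mul] at h
    have h3 : ff R k = X ^ k - ∑ j ∈ range k, C (stirling2 k j : R) * ff R j := by
      rw [h]; ring
    rw [h3, map_sub, phi_X_pow, map_sum]
    have h4 : ∀ j ∈ range k, phi R (C (stirling2 k j : R) * ff R j) = (stirling2 k j : R) := by
      intro j hj
      rw [phi_C_mul, ih j (Finset.mem_range.mp hj), mul_one]
    rw [Finset.sum_congr rfl h4]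
    have h5 : (bell k : R) = ∑ j ∈ range (k + 1), (stirling2 k j : R) := by
      rw [bell]; push_cast; ring
    rw [h5, Finset.sum_range_succ, stirling2_self]
    push_cast
    ring

lemma span_ff : Submodule.span R (Set.range (ff R)) = ⊤ := by
  rw [eq_top_iff]
  intro f hf
  clear hf
  induction f using Polynomial.induction_on' with
  | add f g hf hg => exact Submodule.add_mem _ hf hg
  | monomial n c =>
    have h : (monomial n c : R[X]) = c • (X ^ n) := by
      rw [smul_eq_C_mul, C_mul_X_pow_eq_monomial]
    rw [h]
    apply Submodule.smul_mem
    rw [X_pow_eq (R := R) n]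
    apply Submodule.sum_mem
    intro k _
    rw [← smul_eq_C_mul]
    exact Submodule.smul_mem _ _ (Submodule.subset_span ⟨k, rfl⟩)

lemma ext_ff {ψ χ : R[X] →ₗ[R] R} (h : ∀ k, ψ (ff R k) = χ (ff R k)) : ψ = χ := by
  apply LinearMap.ext_on (span_ff (R := R))
  rintro x ⟨k, rfl⟩
  exact h k

end AltBell

namespace AltBell

variable {p : ℕ} [Fact p.Prime]

lemma ff_prod (k : ℕ) : ff (ZMod p) k = ∏ i ∈ range k, (X - C (i : ZMod p)) := by
  induction k with
  | zero => rfl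
  | succ k ih => rw [Finset.prod_range_succ, ← ih, ff_succ]

lemma ff_p : ff (ZMod p) p = X ^ p - X := by
  have hp : p.Prime := Fact.out
  rw [ff_prod]
  have himg : (range p).image (fun i : ℕ => (i : ZMod p)) = (Finset.univ : Finset (ZMod p)) := by
    apply Finset.eq_univ_iff_forall.mpr
    intro x
    apply Finset.mem_image.mpr
    exact ⟨x.val, Finset.mem_range.mpr (ZMod.val_lt x), by simp [ZMod.natCast_val, ZMod.cast_id]⟩
  have hinj : ∀ i ∈ range p, ∀ j ∈ range p,
      ((i : ℕ) : ZMod p) = ((j : ℕ) : ZMod p) → i = j := by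
    intro i hi j hj hij
    have h := congrArg ZMod.val hij
    rwa [ZMod.val_cast_of_lt (Finset.mem_range.mp hi),
      ZMod.val_cast_of_lt (Finset.mem_range.mp hj)] at h
  have h1 : ∏ i ∈ range p, (X - C (i : ZMod p)) = ∏ x : ZMod p, (X - C x) := by
    rw [← himg, Finset.prod_image hinj]
  rw [h1]
  have hcard : Fintype.card (ZMod p) = p := ZMod.card p
  have hroots : Polynomial.roots ((X : (ZMod p)[X]) ^ p - X)
      = (Finset.univ : Finset (ZMod p)).val := by
    have h := FiniteField.roots_X_pow_card_sub_X (ZMod p)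
    rwa [hcard] at h
  have hmonic : ((X : (ZMod p)[X]) ^ p - X).Monic := by
    apply Polynomial.monic_X_pow_sub
    rw [Polynomial.degree_X]
    exact_mod_cast hp.one_lt
  have hdeg : ((X : (ZMod p)[X]) ^ p - X).natDegree = p :=
    FiniteField.X_pow_card_sub_X_natDegree_eq (ZMod p) hp.one_lt
  have hcards : Multiset.card ((X : (ZMod p)[X]) ^ p - X).roots
      = ((X : (ZMod p)[X]) ^ p - X).natDegree := by
    rw [hroots, hdeg]
    simpa using hcard
  have h2 := Polynomial.prod_multiset_X_sub_C_of_monic_of_roots_card_eq hmonic hcards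
  rw [hroots] at h2
  rw [← h2]
  rfl

lemma ff_p_mul (k : ℕ) : ff (ZMod p) (p + k) = ff (ZMod p) p * ff (ZMod p) k := by
  induction k with
  | zero => simp [ff]
  | succ k ih =>
    have e : p + (k + 1) = (p + k) + 1 := by omega
    rw [e, ff_succ, ih, ff_succ]
    push_cast
    rw [ZMod.natCast_self]
    ring

lemma phi_q_mul (f : (ZMod p)[X]) : phi (ZMod p) ((X ^ p - X) * f) = phi (ZMod p) f := by
  have key : (phi (ZMod p)).comp (LinearMap.mulLeft (ZMod p) ((X : (ZMod p)[X]) ^ p - X))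
      = phi (ZMod p) := by
    apply ext_ff
    intro k
    simp only [LinearMap.comp_apply, LinearMap.mulLeft_apply]
    rw [← ff_p, ← ff_p_mul, phi_ff, phi_ff]
  calc phi (ZMod p) ((X ^ p - X) * f)
      = ((phi (ZMod p)).comp (LinearMap.mulLeft (ZMod p) ((X : (ZMod p)[X]) ^ p - X))) f := rfl
    _ = phi (ZMod p) f := by rw [key]

lemma phi_q_pow (m : ℕ) : phi (ZMod p) ((X ^ p - X : (ZMod p)[X]) ^ m) = 1 := by
  induction m with
  | zero => simpa using phi_one (R := ZMod p)
  | succ m ih => rw [pow_succ, mul_comm, phi_q_mul, ih]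

instance : CharP ((ZMod p)[X]) p :=
  charP_of_injective_ringHom (Polynomial.C_injective (R := ZMod p)) p

lemma X_pow_p_pow (a : ℕ) :
    (X : (ZMod p)[X]) ^ p ^ a = X + ∑ i ∈ range a, (X ^ p - X : (ZMod p)[X]) ^ p ^ i := by
  haveI : ExpChar ((ZMod p)[X]) p := .prime Fact.out
  induction a with
  | zero => simp
  | succ a ih =>
    have h1 : (X : (ZMod p)[X]) ^ p ^ (a + 1) = ((X : (ZMod p)[X]) ^ p ^ a) ^ p := by
      rw [← pow_mul, pow_succ]
    rw [h1, ih, add_pow_char, sum_pow_char]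
    have h2 : ∀ i, ((X ^ p - X : (ZMod p)[X]) ^ p ^ i) ^ p
        = (X ^ p - X : (ZMod p)[X]) ^ p ^ (i + 1) := by
      intro i
      rw [← pow_mul, ← pow_succ]
    rw [Finset.sum_congr rfl fun i _ => h2 i,
      Finset.sum_range_succ' (fun i => (X ^ p - X : (ZMod p)[X]) ^ p ^ i) a, pow_zero, pow_one]
    ring

lemma phi_X : phi (ZMod p) (X : (ZMod p)[X]) = 1 := by
  have h := phi_X_pow (R := ZMod p) 1
  rw [pow_one] at h
  rw [h, bell_one, Nat.cast_one]

lemma phi_X_pow_p_pow (a : ℕ) : phi (ZMod p) ((X : (ZMod p)[X]) ^ p ^ a) = 1 + a := by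
  rw [X_pow_p_pow, map_add, map_sum, phi_X,
    Finset.sum_congr rfl fun i _ => phi_q_pow (p := p) (p ^ i)]
  simp

lemma ff_comp (k : ℕ) :
    (ff (ZMod p) (k + 1)).comp (X + 1)
      = ff (ZMod p) (k + 1) + C ((k + 1 : ℕ) : ZMod p) * ff (ZMod p) k := by
  induction k with
  | zero => simp [ff_succ, ff]
  | succ k ih =>
    rw [ff_succ (k + 1), mul_comp, ih, sub_comp, X_comp, C_comp, ff_succ k]
    push_cast
    simp only [map_add, map_one]
    ring

lemma phi_X_mul (f : (ZMod p)[X]) :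
    phi (ZMod p) (X * f) = phi (ZMod p) (f.comp (X + 1)) := by
  let χ : (ZMod p)[X] →ₗ[ZMod p] ZMod p :=
    (phi (ZMod p)).comp
      (Polynomial.aeval (X + 1 : (ZMod p)[X]) : (ZMod p)[X] →ₐ[ZMod p] (ZMod p)[X]).toLinearMap
  have hx : ∀ g : (ZMod p)[X], χ g = phi (ZMod p) (g.comp (X + 1)) := by
    intro g
    simp only [χ, LinearMap.comp_apply, AlgHom.toLinearMap_apply]
    rw [aeval_def]
    rfl
  have key : (phi (ZMod p)).comp (LinearMap.mulLeft (ZMod p) (X : (ZMod p)[X])) = χ := by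
    apply ext_ff
    intro k
    simp only [LinearMap.comp_apply, LinearMap.mulLeft_apply]
    rw [hx, X_mul_ff, map_add, phi_ff, phi_C_mul, phi_ff, mul_one]
    cases k with
    | zero =>
      simp [show ((ff (ZMod p) 0).comp (X + 1) : (ZMod p)[X]) = 1 by simp [ff], phi_one]
    | succ k =>
      rw [ff_comp, map_add, phi_ff, phi_C_mul, phi_ff, mul_one]
      try push_cast
      try ring
  have h1 : phi (ZMod p) (X * f)
      = ((phi (ZMod p)).comp (LinearMap.mulLeft (ZMod p) (X : (ZMod p)[X]))) f := rfl
  rw [h1, key, hx]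

/-- The alternating geometric polynomial. -/
noncomputable def G (p : ℕ) (N : ℕ) : (ZMod p)[X] := ∑ k ∈ range N, (-X) ^ k

/-- The shifted umbral values. -/
noncomputable def u (p : ℕ) [Fact p.Prime] (a : ℕ) (j : ℕ) : ZMod p :=
  phi (ZMod p) ((G p (p ^ a)).comp (X + C (j : ZMod p)))

lemma neg_X_pow_p_pow (a : ℕ) : ((-X : (ZMod p)[X])) ^ p ^ a = -(X ^ p ^ a) := by
  have hp : p.Prime := Fact.out
  rcases hp.eq_two_or_odd' with h2 | hodd
  · subst h2
    have hneg : ∀ x : (ZMod 2)[X], -x = x := fun x => CharTwo.neg_eq x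
    rw [hneg X, hneg (X ^ 2 ^ a)]
  · exact (hodd.pow).neg_pow X

lemma XG (a : ℕ) : (X + 1) * G p (p ^ a) = 1 + X ^ p ^ a := by
  have hgeom := geom_sum_mul (-X : (ZMod p)[X]) (p ^ a)
  rw [neg_X_pow_p_pow] at hgeom
  have h : G p (p ^ a) = ∑ i ∈ range (p ^ a), (-X : (ZMod p)[X]) ^ i := rfl
  rw [h]
  linear_combination (-1 : (ZMod p)[X]) * hgeom

lemma u_rec (a : ℕ) (j : ℕ) :
    u p a (j + 1) + ((j : ZMod p) + 1) * u p a j = (j : ZMod p) + 2 + a := by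
  haveI : ExpChar ((ZMod p)[X]) p := .prime Fact.out
  have hsN : (X + C (j : ZMod p)) ^ p ^ a = X ^ p ^ a + C (j : ZMod p) := by
    rw [add_pow_char_pow, ← C_pow, ZMod.pow_card_pow]
  have hcomp : (X + C (j : ZMod p) + 1) * (G p (p ^ a)).comp (X + C (j : ZMod p))
      = 1 + (X ^ p ^ a + C (j : ZMod p)) := by
    have h := congrArg (fun f : (ZMod p)[X] => f.comp (X + C (j : ZMod p))) (XG (p := p) a)
    simp only [mul_comp, add_comp, X_comp, one_comp, pow_comp] at h
    rw [h, hsN]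
  have hL : (X + C (j : ZMod p) + 1) * (G p (p ^ a)).comp (X + C (j : ZMod p))
      = X * (G p (p ^ a)).comp (X + C (j : ZMod p))
        + C ((j : ZMod p) + 1) * (G p (p ^ a)).comp (X + C (j : ZMod p)) := by
    rw [C_add, C_1]
    ring
  have happ := congrArg (phi (ZMod p)) (hL.symm.trans hcomp)
  rw [(phi (ZMod p)).map_add, (phi (ZMod p)).map_add, (phi (ZMod p)).map_add, phi_C_mul,
    phi_one, phi_C, phi_X_pow_p_pow, phi_X_mul] at happ
  have hcc : (((G p (p ^ a)).comp (X + C (j : ZMod p))).comp (X + 1))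
      = (G p (p ^ a)).comp (X + C ((j + 1 : ℕ) : ZMod p)) := by
    rw [Polynomial.comp_assoc]
    congr 1
    simp only [add_comp, X_comp, C_comp]
    push_cast
    simp only [map_add, map_one]
    ring
  rw [hcc] at happ
  have e1 : u p a (j + 1)
      = phi (ZMod p) ((G p (p ^ a)).comp (X + C ((j + 1 : ℕ) : ZMod p))) := rfl
  have e2 : u p a j = phi (ZMod p) ((G p (p ^ a)).comp (X + C (j : ZMod p))) := rfl
  rw [e1, e2]
  push_cast at happ ⊢
  linear_combination happ

lemma u_closed (a : ℕ) (j : ℕ) :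
    u p a j = 1 + (a : ZMod p) * ((-1) ^ j * (numDerangements j : ZMod p))
      + (-1) ^ j * (j.factorial : ZMod p) * (u p a 0 - 1 - a) := by
  induction j with
  | zero =>
    simp only [pow_zero, numDerangements_zero, Nat.cast_one, Nat.factorial_zero, one_mul, mul_one]
    ring
  | succ j ih =>
    have hr := u_rec (p := p) a j
    have hu : u p a (j + 1) = ((j : ZMod p) + 2 + a) - ((j : ZMod p) + 1) * u p a j := by
      linear_combination hr
    have hd : ((numDerangements (j + 1) : ℕ) : ZMod p)
        = ((j : ZMod p) + 1) * (numDerangements j : ZMod p) - (-1) ^ j := by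
      have h := congrArg (fun z : ℤ => (z : ZMod p)) (numDerangements_succ j)
      push_cast at h
      exact_mod_cast h
    rw [hu, ih, Nat.factorial_succ]
    push_cast
    have hsq : ((-1 : ZMod p)) ^ (j * 2) = 1 := by
      rw [mul_comm, pow_mul, neg_one_sq, one_pow]
    linear_combination ((a : ZMod p) * (-1) ^ j) * hd - (a : ZMod p) * hsq

lemma u_zero_eq (a : ℕ) : u p a 0 = 1 + (a : ZMod p) := by
  have hp : p.Prime := Fact.out
  have hcp := u_closed (p := p) a p
  have hup : u p a p = u p a 0 := by
    have e : ((p : ℕ) : ZMod p) = ((0 : ℕ) : ZMod p) := by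
      simp [ZMod.natCast_self]
    show phi (ZMod p) ((G p (p ^ a)).comp (X + C ((p : ℕ) : ZMod p)))
      = phi (ZMod p) ((G p (p ^ a)).comp (X + C ((0 : ℕ) : ZMod p)))
    rw [e]
  have hfact : ((p.factorial : ℕ) : ZMod p) = 0 := by
    rw [ZMod.natCast_eq_zero_iff]
    exact Nat.dvd_factorial hp.pos le_rfl
  have hdp : ((numDerangements p : ℕ) : ZMod p) = (-1) ^ p := by
    obtain ⟨q, hq⟩ : ∃ q, p = q + 1 := ⟨p - 1, by have := hp.pos; omega⟩
    have h := congrArg (fun z : ℤ => (z : ZMod p)) (numDerangements_succ q)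
    push_cast at h
    have h0 : ((q : ZMod p) + 1) = 0 := by
      have hps : ((q + 1 : ℕ) : ZMod p) = 0 := by rw [← hq]; exact ZMod.natCast_self p
      push_cast at hps
      exact hps
    rw [h0, zero_mul, zero_sub] at h
    have e1 := congrArg (fun n => ((numDerangements n : ℕ) : ZMod p)) hq
    have e2 := congrArg (fun n => ((-1 : ZMod p)) ^ n) hq
    rw [e1, h, e2, pow_succ]
    ring
  rw [hup, hdp, hfact] at hcp
  rw [hcp]
  have hsq : ((-1 : ZMod p)) ^ p * (-1) ^ p = 1 := by
    rw [← mul_pow]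
    norm_num
  linear_combination (a : ZMod p) * hsq

lemma u_zero_phi (a : ℕ) : u p a 0 = phi (ZMod p) (G p (p ^ a)) := by
  show phi (ZMod p) ((G p (p ^ a)).comp (X + C ((0 : ℕ) : ZMod p)))
    = phi (ZMod p) (G p (p ^ a))
  simp

lemma phi_G (a : ℕ) :
    phi (ZMod p) (G p (p ^ a)) = ∑ k ∈ range (p ^ a), (-1 : ZMod p) ^ k * bell k := by
  show phi (ZMod p) (∑ k ∈ range (p ^ a), (-X) ^ k) = _
  rw [map_sum]
  apply Finset.sum_congr rfl
  intro k _
  have h : ((-X : (ZMod p)[X])) ^ k = C ((-1 : ZMod p) ^ k) * X ^ k := by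
    rw [neg_pow]
    congr 1
    rw [map_pow, map_neg, map_one]
  rw [h, phi_C_mul, phi_X_pow]

end AltBell

/-- For a prime `p` and `a ≥ 1`, `∑_{k=1}^{p^a-1} (-1)^k B_k ≡ a (mod p)`. -/
theorem alt_sum_bell (p : ℕ) [Fact p.Prime] (a : ℕ) (ha : 0 < a) :
    (∑ k ∈ Finset.Icc 1 (p ^ a - 1), (-1 : ℤ) ^ k * bell k) ≡ (a : ℤ) [ZMOD p] := by
  have hp : p.Prime := Fact.out
  have hN : 0 < p ^ a := pow_pos hp.pos a
  have hsplit : ∑ k ∈ Finset.range (p ^ a), (-1 : ZMod p) ^ k * bell k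
      = 1 + ∑ k ∈ Finset.Icc 1 (p ^ a - 1), (-1 : ZMod p) ^ k * bell k := by
    have hIco : Finset.Ico 1 (p ^ a) = Finset.Icc 1 (p ^ a - 1) := by
      rw [show p ^ a = (p ^ a - 1) + 1 by omega, Finset.Ico_add_one_right_eq_Icc]
      simp
    rw [Finset.range_eq_Ico, Finset.sum_eq_sum_Ico_succ_bot hN, hIco]
    norm_num [AltBell.bell_zero]
  have hval : ∑ k ∈ Finset.range (p ^ a), (-1 : ZMod p) ^ k * bell k = 1 + a := by
    rw [← AltBell.phi_G (p := p) a, ← AltBell.u_zero_phi (p := p) a, AltBell.u_zero_eq a]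
  have hsum : ∑ k ∈ Finset.Icc 1 (p ^ a - 1), (-1 : ZMod p) ^ k * bell k = (a : ZMod p) := by
    have h := hsplit.symm.trans hval
    linear_combination h
  apply (ZMod.intCast_eq_intCast_iff _ _ _).mp
  push_cast
  exact hsum
end
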